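/- Let G be a finite group such that the dual Euler totient φ̂(G) := ∑_{H ≤ G} μ(1,H)·|G:H| is nonzero, where μ is the Möbius function of the subgroup lattice. Then G admits a faithful irreducible complex representation. -/

import Mathlib

open Finset Module CategoryTheory

namespace Stmt14Aux

open scoped Classical
set_option linter.unusedSectionVars false
set_option maxHeartbeats 1000000

variable {G : Type} [Group G] [Fintype G]

variable (μ : Subgroup G → Subgroup G → ℤ)

section
variable (hμ_self : ∀ K : Subgroup G, μ K K = 1)
  (hμ_lt : ∀ K K' : Subgroup G, K < K' →
      μ K K' = -∑ L ∈ Finset.univ.filter (fun L : Subgroup G => K < L ∧ L ≤ K'), μ L K')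

include hμ_self hμ_lt in
lemma col_sum (K M : Subgroup G) :
    ∑ L ∈ univ.filter (fun L => K ≤ L ∧ L ≤ M), μ L M = if K = M then 1 else 0 := by
  rcases eq_or_ne K M with rfl | hne
  · have : univ.filter (fun L => K ≤ L ∧ L ≤ K) = {K} := by
      ext L; simp [le_antisymm_iff, and_comm, eq_comm]
    simp [this, hμ_self]
  · simp only [hne, if_false]
    by_cases hKM : K ≤ M
    · have hlt : K < M := lt_of_le_of_ne hKM hne
      have hsplit : univ.filter (fun L => K ≤ L ∧ L ≤ M)
          = insert K (univ.filter (fun L => K < L ∧ L ≤ M)) := by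
        ext L
        simp only [mem_filter, mem_univ, true_and, mem_insert]
        constructor
        · rintro ⟨h1, h2⟩
          rcases eq_or_ne L K with rfl | hLK
          · exact Or.inl rfl
          · exact Or.inr ⟨lt_of_le_of_ne h1 (Ne.symm hLK), h2⟩
        · rintro (rfl | ⟨h1, h2⟩)
          · exact ⟨le_refl _, hKM⟩
          · exact ⟨le_of_lt h1, h2⟩
      have hK : K ∉ univ.filter (fun L => K < L ∧ L ≤ M) := by simp
      rw [hsplit, Finset.sum_insert hK, hμ_lt K M hlt]
      ring
    · have : univ.filter (fun L => K ≤ L ∧ L ≤ M) = ∅ := by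
        ext L
        simp only [mem_filter, mem_univ, true_and, notMem_empty, iff_false]
        rintro ⟨h1, h2⟩
        exact hKM (h1.trans h2)
      simp [this]

include hμ_self hμ_lt in
lemma row_sum (M : Subgroup G) :
    ∑ L ∈ univ.filter (fun L => L ≤ M), μ ⊥ L = if (⊥ : Subgroup G) = M then 1 else 0 := by
  set ζ : Matrix (Subgroup G) (Subgroup G) ℤ := fun K L => if K ≤ L then 1 else 0 with hζ
  set m : Matrix (Subgroup G) (Subgroup G) ℤ := fun K L => if K ≤ L then μ K L else 0 with hm
  have h1 : ζ * m = 1 := by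
    ext K M'
    rw [Matrix.mul_apply, Matrix.one_apply]
    have : ∀ L, ζ K L * m L M' = if K ≤ L ∧ L ≤ M' then μ L M' else 0 := by
      intro L
      simp only [hζ, hm]
      by_cases h1 : K ≤ L <;> by_cases h2 : L ≤ M' <;> simp [h1, h2]
    rw [Finset.sum_congr rfl fun L _ => this L, ← Finset.sum_filter,
      col_sum μ hμ_self hμ_lt K M']
  have h2 : m * ζ = 1 := mul_eq_one_comm.mp h1
  have h3 := congrFun (congrFun h2 ⊥) M
  rw [Matrix.mul_apply, Matrix.one_apply] at h3
  rw [← h3]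
  have : ∀ L, m ⊥ L * ζ L M = if L ≤ M then μ ⊥ L else 0 := by
    intro L
    simp only [hζ, hm, bot_le, if_true]
    by_cases h2 : L ≤ M <;> simp [h2]
  rw [Finset.sum_congr rfl fun L _ => this L, ← Finset.sum_filter]

include hμ_self hμ_lt in
lemma weisner (N : Subgroup G) (hN : N ≠ ⊥) :
    ∀ M : Subgroup G, N ≤ M →
      ∑ H ∈ univ.filter (fun H => H ⊔ N = M), μ ⊥ H = 0 := by
  intro M
  induction M using WellFoundedLT.induction with
  | _ M IH =>
    intro hNM
    have hM : M ≠ ⊥ := fun h => hN (le_bot_iff.mp (h ▸ hNM))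
    have h0 : ∑ H ∈ univ.filter (fun H => H ≤ M), μ ⊥ H = 0 := by
      rw [row_sum μ hμ_self hμ_lt M, if_neg (fun h => hM h.symm)]
    have hmaps : ∀ H ∈ univ.filter (fun H => H ≤ M), H ⊔ N ∈
        univ.filter (fun J => N ≤ J ∧ J ≤ M) := by
      intro H hH
      simp only [mem_filter, mem_univ, true_and] at hH ⊢
      exact ⟨le_sup_right, sup_le hH hNM⟩
    have hfib := Finset.sum_fiberwise_of_maps_to hmaps (fun H => μ ⊥ H)
    rw [h0] at hfib
    have hinner : ∀ J ∈ univ.filter (fun J => N ≤ J ∧ J ≤ M),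
        ∑ H ∈ (univ.filter (fun H => H ≤ M)).filter (fun H => H ⊔ N = J), μ ⊥ H
        = ∑ H ∈ univ.filter (fun H => H ⊔ N = J), μ ⊥ H := by
      intro J hJ
      simp only [mem_filter, mem_univ, true_and] at hJ
      congr 1
      ext H
      simp only [mem_filter, mem_univ, true_and, and_iff_right_iff_imp]
      intro hHJ
      exact le_trans (le_trans le_sup_left hHJ.le) hJ.2
  -- rewrite hfib using hinner, then isolate J = M
    rw [Finset.sum_congr rfl hinner] at hfib
    have hmem : M ∈ univ.filter (fun J => N ≤ J ∧ J ≤ M) := by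
      simp only [mem_filter, mem_univ, true_and]; exact ⟨hNM, le_refl M⟩
    have hz : ∀ J ∈ univ.filter (fun J => N ≤ J ∧ J ≤ M), J ≠ M →
        (∑ H ∈ univ.filter (fun H => H ⊔ N = J), μ ⊥ H) = 0 := by
      intro J hJ hne
      simp only [mem_filter, mem_univ, true_and] at hJ
      exact IH J (lt_of_le_of_ne hJ.2 hne) hJ.1
    have := Finset.sum_eq_single_of_mem (f := fun J =>
        ∑ H ∈ univ.filter (fun H => H ⊔ N = J), μ ⊥ H) M hmem hz
    rw [this] at hfib
    linarith [hfib]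

end


section RepsA
variable {W : Type} [AddCommGroup W] [Module ℂ W] [FiniteDimensional ℂ W]

/-- invariants under a subgroup -/
noncomputable def invH (ρ : Representation ℂ G W) (H : Subgroup G) : Submodule ℂ W :=
  Representation.invariants (ρ.comp H.subtype)

lemma mem_invH {ρ : Representation ℂ G W} {H : Subgroup G} {w : W} :
    w ∈ invH ρ H ↔ ∀ h ∈ H, ρ h w = w := by
  constructor
  · intro hw h hh
    exact hw ⟨h, hh⟩
  · intro hw h
    exact hw h h.2

/-- the subgroup of elements fixing a vector -/
def fixer (ρ : Representation ℂ G W) (w : W) : Subgroup G where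
  carrier := {g | ρ g w = w}
  one_mem' := by simp
  mul_mem' := by
    intro a b ha hb
    simp only [Set.mem_setOf_eq] at *
    rw [map_mul, Module.End.mul_apply, hb, ha]
  inv_mem' := by
    intro a ha
    simp only [Set.mem_setOf_eq] at *
    conv_lhs => rw [← ha]
    rw [← Module.End.mul_apply, ← map_mul, inv_mul_cancel, map_one, Module.End.one_apply]

/-- the kernel of a representation, as a subgroup -/
def repKer (ρ : Representation ℂ G W) : Subgroup G where
  carrier := {g | ρ g = 1}
  one_mem' := by simp
  mul_mem' := by
    intro a b ha hb
    simp only [Set.mem_setOf_eq] at *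
    rw [map_mul, ha, hb, one_mul]
  inv_mem' := by
    intro a ha
    simp only [Set.mem_setOf_eq] at *
    calc ρ a⁻¹ = ρ a⁻¹ * ρ a := by rw [ha, mul_one]
      _ = 1 := by rw [← map_mul, inv_mul_cancel, map_one]

lemma invH_sup_repKer (ρ : Representation ℂ G W) (H : Subgroup G) :
    invH ρ (H ⊔ repKer ρ) = invH ρ H := by
  apply le_antisymm
  · intro w hw
    rw [mem_invH] at hw ⊢
    exact fun h hh => hw h (le_sup_left (α := Subgroup G) hh)
  · intro w hw
    rw [mem_invH] at hw ⊢
    intro h hh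
    have h1 : H ≤ fixer ρ w := fun x hx => hw x hx
    have h2 : repKer ρ ≤ fixer ρ w := by
      intro x hx
      show ρ x w = w
      have : ρ x = 1 := hx
      rw [this, Module.End.one_apply]
    exact (sup_le h1 h2) hh

/-- restriction of a representation to an invariant submodule -/
def subRep (ρ : Representation ℂ G W) (p : Submodule ℂ W) (hp : ∀ g, ∀ w ∈ p, ρ g w ∈ p) :
    Representation ℂ G p where
  toFun g := (ρ g).restrict (hp g)
  map_one' := by
    ext x
    simp [LinearMap.restrict_apply]
  map_mul' g h := by
    ext x
    simp [LinearMap.restrict_apply]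

lemma subRep_coe {ρ : Representation ℂ G W} {p : Submodule ℂ W}
    {hp : ∀ g, ∀ w ∈ p, ρ g w ∈ p} (g : G) (x : p) :
    (subRep ρ p hp g x : W) = ρ g (x : W) := rfl

lemma finrank_invH_add (ρ : Representation ℂ G W) (p q : Submodule ℂ W)
    (hp : ∀ g, ∀ w ∈ p, ρ g w ∈ p) (hq : ∀ g, ∀ w ∈ q, ρ g w ∈ q)
    (hpq : IsCompl p q) (H : Subgroup G) :
    finrank ℂ (invH ρ H) = finrank ℂ (invH (subRep ρ p hp) H)
      + finrank ℂ (invH (subRep ρ q hq) H) := by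
  set P := (invH (subRep ρ p hp) H).map p.subtype with hP
  set Q := (invH (subRep ρ q hq) H).map q.subtype with hQ
  have hPp : P ≤ p := by
    intro x hx
    obtain ⟨y, _, rfl⟩ := hx
    exact y.2
  have hQq : Q ≤ q := by
    intro x hx
    obtain ⟨y, _, rfl⟩ := hx
    exact y.2
  have hPinv : P ≤ invH ρ H := by
    rintro x ⟨y, hy, rfl⟩
    rw [mem_invH]
    intro h hh
    have := (mem_invH.mp hy) h hh
    calc ρ h (y : W) = (subRep ρ p hp h y : W) := rfl
      _ = (y : W) := by rw [this]
  have hQinv : Q ≤ invH ρ H := by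
    rintro x ⟨y, hy, rfl⟩
    rw [mem_invH]
    intro h hh
    have := (mem_invH.mp hy) h hh
    calc ρ h (y : W) = (subRep ρ q hq h y : W) := rfl
      _ = (y : W) := by rw [this]
  have hsup : P ⊔ Q = invH ρ H := by
    apply le_antisymm (sup_le hPinv hQinv)
    intro w hw
    have hw' : w ∈ p ⊔ q := by rw [hpq.sup_eq_top]; trivial
    obtain ⟨x, hx, y, hy, rfl⟩ := Submodule.mem_sup.mp hw'
    rw [mem_invH] at hw
    have hxinv : ∀ h ∈ H, ρ h x = x := by
      intro h hh
      have heq : ρ h x + ρ h y = x + y := by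
        rw [← map_add]; exact hw h hh
      have hd : ρ h x - x ∈ p ⊓ q := by
        constructor
        · exact Submodule.sub_mem p (hp h x hx) hx
        · have : ρ h x - x = y - ρ h y := by abel_nf; linear_combination (norm := abel) heq
          rw [this]
          exact Submodule.sub_mem q hy (hq h y hy)
      rw [hpq.inf_eq_bot] at hd
      have := Submodule.mem_bot (R := ℂ) |>.mp hd
      linear_combination (norm := abel) this
    have hyinv : ∀ h ∈ H, ρ h y = y := by
      intro h hh
      have heq : ρ h x + ρ h y = x + y := by
        rw [← map_add]; exact hw h hh
      rw [hxinv h hh] at heq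
      exact add_left_cancel heq
    apply Submodule.add_mem_sup
    · exact ⟨⟨x, hx⟩, mem_invH.mpr (fun h hh => Subtype.ext (hxinv h hh)), rfl⟩
    · exact ⟨⟨y, hy⟩, mem_invH.mpr (fun h hh => Subtype.ext (hyinv h hh)), rfl⟩
  have hdis : P ⊓ Q = ⊥ := by
    rw [← le_bot_iff, ← hpq.inf_eq_bot]
    exact inf_le_inf hPp hQq
  have h1 := Submodule.finrank_sup_add_finrank_inf_eq P Q
  rw [hsup, hdis, finrank_bot, add_zero] at h1
  rw [h1, Submodule.finrank_map_subtype_eq, Submodule.finrank_map_subtype_eq]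




lemma exists_invariant_compl (ρ : Representation ℂ G W) (p : Submodule ℂ W)
    (hp : ∀ g, ∀ w ∈ p, ρ g w ∈ p) :
    ∃ q : Submodule ℂ W, (∀ g, ∀ w ∈ q, ρ g w ∈ q) ∧ IsCompl p q := by
  obtain ⟨q₀, hq₀⟩ := Submodule.exists_isCompl p
  set π₀ : W →ₗ[ℂ] W := p.subtype ∘ₗ (p.linearProjOfIsCompl q₀ hq₀) with hπ₀
  have hπ₀p : ∀ x ∈ p, π₀ x = x := by
    intro x hx
    simp [hπ₀, Submodule.linearProjOfIsCompl_apply_left hq₀ ⟨x, hx⟩]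
    exact congrArg Subtype.val (Submodule.linearProjOfIsCompl_apply_left hq₀ ⟨x, hx⟩)
  have hπ₀mem : ∀ x, π₀ x ∈ p := fun x => (p.linearProjOfIsCompl q₀ hq₀ x).2
  set c : ℂ := (Fintype.card G : ℂ)⁻¹ with hc
  have hcard : (Fintype.card G : ℂ) ≠ 0 := by
    exact_mod_cast Fintype.card_ne_zero
  set π : W →ₗ[ℂ] W := c • ∑ g : G, (ρ g) ∘ₗ π₀ ∘ₗ (ρ g⁻¹) with hπ
  have hπ_apply : ∀ x, π x = c • ∑ g : G, ρ g (π₀ (ρ g⁻¹ x)) := by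
    intro x
    simp [hπ, LinearMap.sum_apply]
  have hπmem : ∀ x, π x ∈ p := by
    intro x
    rw [hπ_apply]
    exact Submodule.smul_mem _ _ (Submodule.sum_mem _ fun g _ =>
      hp g _ (hπ₀mem _))
  have hπid : ∀ x ∈ p, π x = x := by
    intro x hx
    rw [hπ_apply]
    have : ∀ g : G, ρ g (π₀ (ρ g⁻¹ x)) = x := by
      intro g
      rw [hπ₀p _ (hp g⁻¹ x hx), ← Module.End.mul_apply, ← map_mul, mul_inv_cancel, map_one,
        Module.End.one_apply]
    rw [Finset.sum_congr rfl fun g _ => this g, Finset.sum_const, card_univ, hc]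
    rw [← Nat.cast_smul_eq_nsmul ℂ, smul_smul, inv_mul_cancel₀ hcard, one_smul]
  have hπcomm : ∀ h : G, π ∘ₗ ρ h = ρ h ∘ₗ π := by
    intro h
    ext x
    simp only [LinearMap.comp_apply]
    rw [hπ_apply, hπ_apply, map_smul]
    congr 1
    rw [map_sum]
    refine (Fintype.sum_bijective (fun g => h * g) (Group.mulLeft_bijective h) _ _ ?_).symm
    intro g
    rw [map_mul, Module.End.mul_apply]
    congr 2
    rw [← Module.End.mul_apply (ρ (h*g)⁻¹) (ρ h), ← map_mul]
    congr 1
    group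
  refine ⟨LinearMap.ker π, ?_, ?_⟩
  · intro g w hw
    have : π (ρ g w) = ρ g (π w) := by
      have := congrArg (fun f => f w) (hπcomm g)
      simpa using this
    simp only [LinearMap.mem_ker] at hw ⊢
    rw [this, hw, map_zero]
  · have hcod : ∀ x : p, (LinearMap.codRestrict p π hπmem) x = x := by
      intro x
      apply Subtype.ext
      simp [LinearMap.codRestrict_apply, hπid x x.2]
    have := LinearMap.isCompl_of_proj hcod
    rwa [LinearMap.ker_codRestrict] at this



lemma trace_ofMulAction (g : G) :
    LinearMap.trace ℂ (MonoidAlgebra ℂ G) (Representation.ofMulAction ℂ G G g)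
      = (if g = 1 then (Fintype.card G : ℂ) else 0) := by
  classical
  rw [LinearMap.trace_eq_matrix_trace ℂ (MonoidAlgebra.basis G ℂ)]
  rw [Matrix.trace]
  have hdiag : ∀ x : G, (LinearMap.toMatrix (MonoidAlgebra.basis G ℂ) (MonoidAlgebra.basis G ℂ)
      (Representation.ofMulAction ℂ G G g)).diag x = if g * x = x then 1 else 0 := by
    intro x
    rw [Matrix.diag, LinearMap.toMatrix_apply]
    simp [Representation.ofMulAction_single, Finsupp.single_apply]
    rw [← MonoidAlgebra.basis_apply, Module.Basis.repr_self, Finsupp.single_apply]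
    simp
  rw [Finset.sum_congr rfl fun x _ => hdiag x]
  by_cases hg : g = 1
  · subst hg; simp
  · rw [if_neg hg]
    apply Finset.sum_eq_zero
    intro x _
    rw [if_neg]
    intro hx
    exact hg (mul_right_cancel (by rw [one_mul, hx]))

lemma finrank_invH_regular (H : Subgroup G) :
    finrank ℂ (invH (Representation.ofMulAction ℂ G G) H) = H.index := by
  have hcardH : (Fintype.card ↥H : ℂ) ≠ 0 := by exact_mod_cast Fintype.card_ne_zero
  have : Invertible (Fintype.card ↥H : ℂ) := invertibleOfNonzero hcardH
  set ρH : Representation ℂ ↥H (MonoidAlgebra ℂ G) :=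
    (Representation.ofMulAction ℂ G G).comp H.subtype with hρH
  set V : FDRep ℂ ↥H := FDRep.of ρH with hV
  have havg := FDRep.average_char_eq_finrank_invariants V
  have hchar : ∀ h : ↥H, V.character h = if (h : G) = 1 then (Fintype.card G : ℂ) else 0 := by
    intro h
    rw [FDRep.character]
    have : V.ρ h = Representation.ofMulAction ℂ G G (h : G) := rfl
    rw [this]
    exact trace_ofMulAction _
  have hsum : ∑ h : ↥H, V.character h = (Fintype.card G : ℂ) := by
    rw [Finset.sum_congr rfl fun h _ => hchar h]
    have h1 : ∀ h : ↥H, ((h : G) = 1) ↔ (h = 1) := fun h => by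
      constructor
      · intro hh; exact Subtype.ext hh
      · rintro rfl; rfl
    simp only [h1]
    simp
  rw [hsum] at havg
  have hinv : Representation.invariants V.ρ = invH (Representation.ofMulAction ℂ G G) H := rfl
  rw [hinv] at havg
  have h2 : (H.index : ℂ) * (Fintype.card ↥H) = (Fintype.card G : ℂ) := by
    have := Subgroup.card_mul_index H
    rw [Nat.card_eq_fintype_card, Nat.card_eq_fintype_card] at this
    exact_mod_cast congrArg (Nat.cast (R := ℂ)) (by rw [mul_comm] at this; exact this)
  rw [Nat.card_eq_fintype_card] at havg
  have hfin : (finrank ℂ (invH (Representation.ofMulAction ℂ G G) H) : ℂ)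
      = (↑(Fintype.card ↥H))⁻¹ * ↑(Fintype.card G) := havg.symm
  have hfin2 : (finrank ℂ (invH (Representation.ofMulAction ℂ G G) H) : ℂ)
      = (H.index : ℂ) := by
    rw [hfin, ← h2]
    field_simp
  exact_mod_cast hfin2



lemma simple_of_irreducible (ρ : Representation ℂ G W)
    (hW : 0 < finrank ℂ W)
    (hsimp : ∀ p : Submodule ℂ W, (∀ g, ∀ w ∈ p, ρ g w ∈ p) → p = ⊥ ∨ p = ⊤) :
    Simple (FDRep.of ρ) := by
  have hnt : Nontrivial W := Module.nontrivial_of_finrank_pos hW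
  constructor
  intro Y f hmono
  set F : Y →ₗ[ℂ] W := f.hom.hom.hom with hF
  have hcomm : ∀ (g : G) (y : Y), F (Y.ρ g y) = ρ g (F y) := by
    intro g y
    exact congrArg (fun φ => φ.hom.hom y) (f.comm g)
  constructor
  · -- IsIso f → f ≠ 0
    intro hiso h0
    obtain ⟨w, hw⟩ := exists_ne (0 : W)
    obtain ⟨finv, _, hif⟩ := hiso.out
    rw [h0, Limits.comp_zero] at hif
    have h2 := congrArg Action.Hom.hom hif
    rw [Action.zero_hom, Action.id_hom] at h2
    have h3 : (0 : W →ₗ[ℂ] W) w = (LinearMap.id : W →ₗ[ℂ] W) w := by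
      exact congrArg (fun φ => φ.hom.hom w) h2
    simp only [LinearMap.zero_apply, LinearMap.id_apply] at h3
    exact hw h3.symm
  · -- f ≠ 0 → IsIso f
    intro hfne
    set K : Submodule ℂ Y := LinearMap.ker F with hK
    have hKinv : ∀ g : G, ∀ y ∈ K, Y.ρ g y ∈ K := by
      intro g y hy
      simp only [hK, LinearMap.mem_ker] at hy ⊢
      rw [hcomm, hy, map_zero]
    set Z : FDRep ℂ G := FDRep.of (subRep Y.ρ K hKinv) with hZ
    set ι : Z ⟶ Y := ⟨ObjectProperty.homMk (ModuleCat.ofHom (K.subtype : ↥K →ₗ[ℂ] Y)), fun g => rfl⟩ with hι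
    have hιf : ι ≫ f = (0 : Z ⟶ Y) ≫ f := by
      apply Action.hom_ext
      apply FGModuleCat.hom_ext
      show (F.comp K.subtype : ↥K →ₗ[ℂ] W) = _
      rw [Limits.zero_comp]
      show (F.comp K.subtype : ↥K →ₗ[ℂ] W) = (0 : Z ⟶ FDRep.of ρ).hom.hom.hom
      rw [Action.zero_hom]
      apply LinearMap.ext
      intro x
      have hx : (x : Y) ∈ K := x.2
      simp only [hK, LinearMap.mem_ker] at hx
      show F (x : Y) = (0 : ↥K →ₗ[ℂ] W) x
      rw [LinearMap.zero_apply]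
      exact hx
    have hι0 : ι = (0 : Z ⟶ Y) := (cancel_mono f).mp hιf
    have hinj : Function.Injective F := by
      rw [← LinearMap.ker_eq_bot, ← hK, Submodule.eq_bot_iff]
      intro y hy
      have h2 : (K.subtype : ↥K →ₗ[ℂ] Y) = (0 : Z ⟶ Y).hom.hom.hom :=
          congrArg (fun φ => φ.hom.hom.hom) hι0
      rw [Action.zero_hom] at h2
      have h3 := DFunLike.congr_fun h2 (⟨y, hy⟩ : ↥K)
      simpa using h3
    have hsurj : Function.Surjective F := by
      have hrinv : ∀ g : G, ∀ w ∈ LinearMap.range F, ρ g w ∈ LinearMap.range F := by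
        intro g w hw
        obtain ⟨y, rfl⟩ := hw
        exact ⟨Y.ρ g y, hcomm g y⟩
      rcases hsimp _ hrinv with h | h
      · exfalso
        apply hfne
        apply Action.hom_ext
        apply FGModuleCat.hom_ext
        show F = (0 : Y ⟶ FDRep.of ρ).hom.hom.hom
        rw [Action.zero_hom]
        apply LinearMap.ext
        intro y
        have : F y ∈ LinearMap.range F := ⟨y, rfl⟩
        rw [h] at this
        simpa using this
      · rw [← LinearMap.range_eq_top]
        exact h
    set e : Y ≃ₗ[ℂ] W := LinearEquiv.ofBijective F ⟨hinj, hsurj⟩ with he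
    have hecomm : ∀ g : G, (e.symm.toLinearMap).comp (ρ g) = (Y.ρ g).comp e.symm.toLinearMap := by
      intro g
      apply LinearMap.ext
      intro w
      apply hinj
      show F (e.symm (ρ g w)) = F (Y.ρ g (e.symm w))
      rw [hcomm]
      have h1 : F (e.symm (ρ g w)) = ρ g w := e.apply_symm_apply _
      have h2 : F (e.symm w) = w := e.apply_symm_apply _
      rw [h1, h2]
    set ginv : FDRep.of ρ ⟶ Y := ⟨ObjectProperty.homMk (ModuleCat.ofHom (e.symm.toLinearMap : W →ₗ[ℂ] Y)),
        fun g => FGModuleCat.hom_ext (hecomm g)⟩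
      with hginv
    refine ⟨ginv, ?_, ?_⟩
    · apply Action.hom_ext
      apply FGModuleCat.hom_ext
      show e.symm.toLinearMap.comp F = _
      rw [Action.id_hom]
      apply LinearMap.ext
      intro y
      show e.symm (F y) = y
      exact e.symm_apply_apply y
    · apply Action.hom_ext
      apply FGModuleCat.hom_ext
      show F.comp e.symm.toLinearMap = _
      rw [Action.id_hom]
      apply LinearMap.ext
      intro w
      show F (e.symm w) = w
      exact e.apply_symm_apply w



section Vanish

variable (μ : Subgroup G → Subgroup G → ℤ)
variable (hμ_self : ∀ K : Subgroup G, μ K K = 1)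
  (hμ_lt : ∀ K K' : Subgroup G, K < K' →
      μ K K' = -∑ L ∈ Finset.univ.filter (fun L : Subgroup G => K < L ∧ L ≤ K'), μ L K')

include hμ_self hμ_lt in
lemma T_eq_zero_of_repKer_ne_bot (ρ : Representation ℂ G W) (hker : repKer ρ ≠ ⊥) :
    ∑ H : Subgroup G, μ ⊥ H * (finrank ℂ (invH ρ H) : ℤ) = 0 := by
  set N := repKer ρ with hN
  have hstep : ∀ H : Subgroup G, finrank ℂ (invH ρ H) = finrank ℂ (invH ρ (H ⊔ N)) :=
    fun H => by rw [invH_sup_repKer]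
  have h1 : ∑ H : Subgroup G, μ ⊥ H * (finrank ℂ (invH ρ H) : ℤ)
      = ∑ H : Subgroup G, μ ⊥ H * (finrank ℂ (invH ρ (H ⊔ N)) : ℤ) := by
    exact Finset.sum_congr rfl fun H _ => by rw [hstep H]
  rw [h1]
  have h2 := Finset.sum_fiberwise_of_maps_to
    (g := fun H : Subgroup G => H ⊔ N) (s := Finset.univ) (t := Finset.univ)
    (fun H _ => Finset.mem_univ _)
    (fun H => μ ⊥ H * (finrank ℂ (invH ρ (H ⊔ N)) : ℤ))
  rw [← h2]
  apply Finset.sum_eq_zero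
  intro J _
  have h3 : ∀ H ∈ Finset.univ.filter (fun H : Subgroup G => H ⊔ N = J),
      μ ⊥ H * (finrank ℂ (invH ρ (H ⊔ N)) : ℤ)
        = μ ⊥ H * (finrank ℂ (invH ρ J) : ℤ) := by
    intro H hH
    simp only [Finset.mem_filter, Finset.mem_univ, true_and] at hH
    rw [hH]
  rw [Finset.sum_congr rfl h3, ← Finset.sum_mul]
  by_cases hNJ : N ≤ J
  · rw [weisner μ hμ_self hμ_lt N hker J hNJ, zero_mul]
  · have hempty : Finset.univ.filter (fun H : Subgroup G => H ⊔ N = J) = ∅ := by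
      ext H
      simp only [Finset.mem_filter, Finset.mem_univ, true_and, Finset.notMem_empty, iff_false]
      intro h
      exact hNJ (h ▸ le_sup_right)
    rw [hempty, Finset.sum_empty, zero_mul]

include hμ_self hμ_lt in
lemma T_eq_zero (hcon : ¬ ∃ V : FDRep ℂ G, Simple V ∧ Function.Injective V.ρ) :
    ∀ (n : ℕ) (W : Type) [AddCommGroup W] [Module ℂ W] [FiniteDimensional ℂ W]
      (ρ : Representation ℂ G W), finrank ℂ W ≤ n →
      ∑ H : Subgroup G, μ ⊥ H * (finrank ℂ (invH ρ H) : ℤ) = 0 := by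
  intro n
  induction n with
  | zero =>
    intro W _ _ _ ρ hn
    have hz : ∀ H : Subgroup G, finrank ℂ (invH ρ H) = 0 := by
      intro H
      have := Submodule.finrank_le (invH ρ H)
      omega
    simp [hz]
  | succ n IH =>
    intro W _ _ _ ρ hn
    by_cases h0 : finrank ℂ W = 0
    · have hz : ∀ H : Subgroup G, finrank ℂ (invH ρ H) = 0 := by
        intro H
        have := Submodule.finrank_le (invH ρ H)
        omega
      simp [hz]
    · by_cases hker : repKer ρ = ⊥
      · by_cases hirr : ∀ p : Submodule ℂ W, (∀ g, ∀ w ∈ p, ρ g w ∈ p) → p = ⊥ ∨ p = ⊤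
        · exfalso
          apply hcon
          refine ⟨FDRep.of ρ, simple_of_irreducible ρ (Nat.pos_of_ne_zero h0) hirr, ?_⟩
          intro g g' hgg'
          have h1 : ρ (g⁻¹ * g') = 1 := by
            have hgg2 : ρ g = ρ g' := hgg'
            rw [map_mul, ← hgg2, ← map_mul, inv_mul_cancel, map_one]
          have h2 : g⁻¹ * g' ∈ repKer ρ := h1
          rw [hker] at h2
          have h3 : g⁻¹ * g' = 1 := h2
          calc g = g * (g⁻¹ * g') := by rw [h3, mul_one]
            _ = g' := by group
        · push_neg at hirr
          obtain ⟨p, hp, hpbot, hptop⟩ := hirr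
          obtain ⟨q, hq, hpq⟩ := exists_invariant_compl ρ p hp
          have hsum : ∀ H : Subgroup G, finrank ℂ (invH ρ H)
              = finrank ℂ (invH (subRep ρ p hp) H) + finrank ℂ (invH (subRep ρ q hq) H) :=
            finrank_invH_add ρ p q hp hq hpq
          have hplt : finrank ℂ p < finrank ℂ W :=
            Submodule.finrank_lt hptop
          have hqtop : q ≠ ⊤ := by
            intro h
            apply hpbot
            have := hpq.disjoint
            rw [h, disjoint_top] at this
            exact this
          have hqlt : finrank ℂ q < finrank ℂ W :=
            Submodule.finrank_lt hqtop
          have hsum2 : ∑ H : Subgroup G, μ ⊥ H * (finrank ℂ (invH ρ H) : ℤ)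
              = (∑ H : Subgroup G, μ ⊥ H * (finrank ℂ (invH (subRep ρ p hp) H) : ℤ))
                + ∑ H : Subgroup G, μ ⊥ H * (finrank ℂ (invH (subRep ρ q hq) H) : ℤ) := by
            rw [← Finset.sum_add_distrib]
            refine Finset.sum_congr rfl fun H _ => ?_
            rw [hsum H]
            push_cast
            ring
          rw [hsum2,
            IH ↥p (subRep ρ p hp) (by omega),
            IH ↥q (subRep ρ q hq) (by omega), add_zero]
      · exact T_eq_zero_of_repKer_ne_bot μ hμ_self hμ_lt ρ hker

end Vanish
end RepsA
end Stmt14Aux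

open scoped Classical in
/-- If the dual Euler totient `φ̂(G) = ∑_{H ≤ G} μ(1,H)·|G:H|` of a finite
group `G` is nonzero, then `G` admits a faithful irreducible complex
representation. -/
theorem stmt14 {G : Type} [Group G] [Fintype G]
    (μ : Subgroup G → Subgroup G → ℤ)
    (hμ_self : ∀ K : Subgroup G, μ K K = 1)
    (hμ_lt : ∀ K K' : Subgroup G, K < K' →
      μ K K' = -∑ L ∈ Finset.univ.filter (fun L : Subgroup G => K < L ∧ L ≤ K'), μ L K')
    (hne : (∑ H : Subgroup G, μ ⊥ H * (H.index : ℤ)) ≠ 0) :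
    ∃ V : FDRep ℂ G, CategoryTheory.Simple V ∧ Function.Injective V.ρ := by
  by_contra hcon
  apply hne
  have h0 := Stmt14Aux.T_eq_zero μ hμ_self hμ_lt hcon (Module.finrank ℂ (MonoidAlgebra ℂ G))
    (MonoidAlgebra ℂ G) (Representation.ofMulAction ℂ G G) le_rfl
  rw [← h0]
  refine Finset.sum_congr rfl fun H _ => ?_
  rw [Stmt14Aux.finrank_invH_regular H]
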